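/- Let A be an S-ring over a finite abelian group G of order n. Suppose that for every prime p dividing n, the Sylow p-subgroup G_p of G is an A-subgroup and A_{G_p} is a p-S-ring. Then A is the tensor product over all p ∈ π(n) of the S-rings A_{G_p}, i.e. every basic set X of A satisfies X = ∏_p X_{G_p} where X_{G_p} is the projection of X to G_p. -/

import Mathlib

open scoped Pointwise

/-- An S-ring (Schur ring) over a finite group `G`, presented by its
partition into basic sets: a partition of `G` containing `{1}`, closed under
inversion, and such that the span of the indicator elements is closed under
multiplication (expressed via constancy of structure constants). -/
structure SRing (G : Type*) [Group G] where
  parts : Set (Set G)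
  nonempty_mem : ∀ X ∈ parts, X.Nonempty
  one_mem : ({(1 : G)} : Set G) ∈ parts
  exists_mem : ∀ g : G, ∃ X ∈ parts, g ∈ X
  eq_of_mem : ∀ X ∈ parts, ∀ Y ∈ parts, ∀ g : G, g ∈ X → g ∈ Y → X = Y
  inv_mem : ∀ X ∈ parts, X⁻¹ ∈ parts
  structConst : ∀ X ∈ parts, ∀ Y ∈ parts, ∀ Z ∈ parts, ∀ z₁ ∈ Z, ∀ z₂ ∈ Z,
    {q : G × G | q.1 ∈ X ∧ q.2 ∈ Y ∧ q.1 * q.2 = z₁}.ncard =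
    {q : G × G | q.1 ∈ X ∧ q.2 ∈ Y ∧ q.1 * q.2 = z₂}.ncard

namespace SRing

variable {G : Type*} [Group G]

/-- The thin radical of an S-ring: the set of group elements whose
singleton is a basic set. -/
def thin (A : SRing G) : Set G := {x : G | ({x} : Set G) ∈ A.parts}

/-- A subgroup `H` is an `A`-subgroup if it is a union of basic sets. -/
def IsASubgroup (A : SRing G) (H : Subgroup G) : Prop :=
  ∀ X ∈ A.parts, ∀ g ∈ X, g ∈ H → X ⊆ (H : Set G)

/-- `A = ZG`, i.e. every basic set is a singleton. -/
def IsFull (A : SRing G) : Prop := ∀ X ∈ A.parts, ∃ g : G, X = {g}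

/-- A permutation is an automorphism of the S-ring `A` if it preserves the
partition of `G × G` induced by the basic sets. -/
def IsAut (A : SRing G) (f : Equiv.Perm G) : Prop :=
  ∀ X ∈ A.parts, ∀ x y : G, y * x⁻¹ ∈ X ↔ (f y) * (f x)⁻¹ ∈ X

end SRing

/-- The radical of a subset `X` of a group: the subgroup of elements `g`
with `g • X = X` (left translations stabilizing `X`). -/
def setRad {G : Type*} [Group G] (X : Set G) : Subgroup G where
  carrier := {g : G | g • X = X}
  one_mem' := one_smul G X
  mul_mem' := by
    intro a b ha hb
    simp only [Set.mem_setOf_eq] at *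
    rw [mul_smul, hb, ha]
  inv_mem' := by
    intro a ha
    simp only [Set.mem_setOf_eq] at *
    calc a⁻¹ • X = a⁻¹ • (a • X) := by rw [ha]
    _ = X := inv_smul_smul a X

/-- A permutation of `G` belongs to the holomorph `Hol(G)` if it is the
composition of an automorphism of `G` with a right translation. -/
def IsHolPerm {G : Type*} [Group G] (f : Equiv.Perm G) : Prop :=
  ∃ σ : MulAut G, ∃ a : G, ∀ g : G, f g = σ g * a

namespace SRing

variable {G : Type*} [Group G]

/-- An S-ring is normal if all of its automorphisms lie in the holomorph. -/
def IsNormal (A : SRing G) : Prop := ∀ f : Equiv.Perm G, A.IsAut f → IsHolPerm f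

/-- `f ∈ Iso(A)`: `f` is a combinatorial isomorphism from `A` onto some
S-ring over `G`. -/
def IsIsoPerm (A : SRing G) (f : Equiv.Perm G) : Prop :=
  ∃ B : SRing G, ∀ X ∈ A.parts, ∃ X' ∈ B.parts,
    ∀ x y : G, y * x⁻¹ ∈ X ↔ (f y) * (f x)⁻¹ ∈ X'

/-- An S-ring is CI if `Iso(A) = Aut(A)·Aut(G)`. -/
def IsCI (A : SRing G) : Prop :=
  ∀ f : Equiv.Perm G, A.IsIsoPerm f →
    ∃ a : Equiv.Perm G, A.IsAut a ∧ ∃ σ : MulAut G, ∀ x : G, f x = a (σ x)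

end SRing

/-- The `p`-component of an element `g` of a finite group: `g ^ k` where
`k ≡ 1 (mod p^a)` and `k ≡ 0 (mod m)`, with `|G| = p^a·m`, `p ∤ m`. -/
noncomputable def pPart {G : Type*} [Group G] [Fintype G] (p : ℕ) (g : G) : G :=
  let n := Nat.card G
  let a := n.factorization p
  let m := n / p ^ a
  g ^ (m * ((m : ZMod (p ^ a))⁻¹).val)


namespace SylowTens

set_option linter.unusedSectionVars false

open Set

section Comb

variable {G : Type*} [Group G] [Fintype G] (A : SRing G)

/-- `S` is a union of basic sets of `A`. -/
def ST (S : Set G) : Prop := ∀ X ∈ A.parts, (X ∩ S).Nonempty → X ⊆ S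

/-- Structure-constant count. -/
noncomputable def cnt (S T : Set G) (z : G) : ℕ :=
  {q : G × G | q.1 ∈ S ∧ q.2 ∈ T ∧ q.1 * q.2 = z}.ncard

variable {A}

lemma st_part {X : Set G} (hX : X ∈ A.parts) : ST A X := by
  rintro Y hY ⟨g, hgY, hgX⟩
  rw [A.eq_of_mem Y hY X hX g hgY hgX]

lemma st_inter {S T : Set G} (hS : ST A S) (hT : ST A T) : ST A (S ∩ T) := by
  rintro X hX ⟨g, hgX, hgS, hgT⟩
  exact subset_inter (hS X hX ⟨g, hgX, hgS⟩) (hT X hX ⟨g, hgX, hgT⟩)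

lemma st_one : ST A (1 : Set G) := by
  rintro X hX ⟨g, hgX, hg1⟩
  have : X = {(1:G)} := A.eq_of_mem X hX _ A.one_mem g hgX hg1
  rw [this]; rintro y rfl; rfl

lemma st_diff {S X : Set G} (hS : ST A S) (hX : X ∈ A.parts) : ST A (S \ X) := by
  rintro Y hY ⟨g, hgY, hgS, hgX⟩
  have hYS : Y ⊆ S := hS Y hY ⟨g, hgY, hgS⟩
  intro y hy
  refine ⟨hYS hy, fun hyX => hgX ?_⟩
  rw [A.eq_of_mem Y hY X hX y hy hyX] at hgY; exact hgY

lemma cnt_union_left {S₁ S₂ T : Set G} (h : Disjoint S₁ S₂) (z : G) :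
    cnt (S₁ ∪ S₂) T z = cnt S₁ T z + cnt S₂ T z := by
  have hset : {q : G × G | q.1 ∈ S₁ ∪ S₂ ∧ q.2 ∈ T ∧ q.1 * q.2 = z} =
      {q : G × G | q.1 ∈ S₁ ∧ q.2 ∈ T ∧ q.1 * q.2 = z} ∪
      {q : G × G | q.1 ∈ S₂ ∧ q.2 ∈ T ∧ q.1 * q.2 = z} := by
    ext q; by_cases h1 : q.1 ∈ S₁ <;> by_cases h2 : q.1 ∈ S₂ <;>
      simp [h1, h2, Set.mem_union]
  rw [cnt, hset, Set.ncard_union_eq ?_ (Set.toFinite _) (Set.toFinite _)]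
  · rfl
  · rw [Set.disjoint_left]
    rintro q ⟨h1, -⟩ ⟨h2, -⟩
    exact (Set.disjoint_left.mp h) h1 h2

lemma cnt_union_right {S T₁ T₂ : Set G} (h : Disjoint T₁ T₂) (z : G) :
    cnt S (T₁ ∪ T₂) z = cnt S T₁ z + cnt S T₂ z := by
  have hset : {q : G × G | q.1 ∈ S ∧ q.2 ∈ T₁ ∪ T₂ ∧ q.1 * q.2 = z} =
      {q : G × G | q.1 ∈ S ∧ q.2 ∈ T₁ ∧ q.1 * q.2 = z} ∪
      {q : G × G | q.1 ∈ S ∧ q.2 ∈ T₂ ∧ q.1 * q.2 = z} := by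
    ext q; by_cases h1 : q.2 ∈ T₁ <;> by_cases h2 : q.2 ∈ T₂ <;>
      simp [h1, h2, Set.mem_union, and_or_left]
  rw [cnt, hset, Set.ncard_union_eq ?_ (Set.toFinite _) (Set.toFinite _)]
  · rfl
  · rw [Set.disjoint_left]
    rintro q ⟨-, h1, -⟩ ⟨-, h2, -⟩
    exact (Set.disjoint_left.mp h) h1 h2

lemma st_split {S X : Set G} (hS : ST A S) (hX : X ∈ A.parts)
    (hXS : (X ∩ S).Nonempty) : S = X ∪ (S \ X) ∧ Disjoint X (S \ X) ∧
      (S \ X).ncard < S.ncard := by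
  have hXsub : X ⊆ S := hS X hX hXS
  obtain ⟨x, hxX⟩ := A.nonempty_mem X hX
  refine ⟨by rw [Set.union_diff_cancel' (le_refl X) hXsub], Set.disjoint_sdiff_right, ?_⟩
  have h1 : S \ X ⊂ S := by
    refine ⟨Set.diff_subset, fun hsub => ?_⟩
    exact (hsub (hXsub hxX)).2 hxX
  exact Set.ncard_lt_ncard h1 (Set.toFinite S)

/-- The key counting constancy lemma, part-part case is `A.structConst`. -/
lemma cnt_const_pp {X Y Z : Set G} (hX : X ∈ A.parts) (hY : Y ∈ A.parts)
    (hZ : Z ∈ A.parts) {z₁ z₂ : G} (h1 : z₁ ∈ Z) (h2 : z₂ ∈ Z) :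
    cnt X Y z₁ = cnt X Y z₂ :=
  A.structConst X hX Y hY Z hZ z₁ h1 z₂ h2

lemma cnt_const_sp {Y : Set G} (hY : Y ∈ A.parts) :
    ∀ N S, S.ncard ≤ N → ST A S → ∀ Z ∈ A.parts, ∀ z₁ ∈ Z, ∀ z₂ ∈ Z,
      cnt S Y z₁ = cnt S Y z₂ := by
  intro N
  induction N with
  | zero =>
    intro S hN _ Z _ z₁ _ z₂ _
    have : S = ∅ := by
      rcases Set.eq_empty_or_nonempty S with h | h
      · exact h
      · exact absurd (Nat.le_zero.mp hN) (Set.ncard_ne_zero_of_mem h.choose_spec (Set.toFinite S)).elim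
    subst this
    simp [cnt]
  | succ N ih =>
    intro S hN hS Z hZ z₁ h1 z₂ h2
    rcases Set.eq_empty_or_nonempty S with rfl | ⟨s, hs⟩
    · simp [cnt]
    obtain ⟨X, hX, hsX⟩ := A.exists_mem s
    obtain ⟨hSeq, hdisj, hlt⟩ := st_split hS hX ⟨s, hsX, hs⟩
    have hS' : ST A (S \ X) := st_diff hS hX
    calc cnt S Y z₁ = cnt X Y z₁ + cnt (S \ X) Y z₁ := by
            rw [← cnt_union_left hdisj, ← hSeq]
    _ = cnt X Y z₂ + cnt (S \ X) Y z₂ := by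
            rw [cnt_const_pp hX hY hZ h1 h2,
              ih (S \ X) (Nat.lt_succ_iff.mp (lt_of_lt_of_le hlt hN)) hS' Z hZ z₁ h1 z₂ h2]
    _ = cnt S Y z₂ := by rw [← cnt_union_left hdisj, ← hSeq]

lemma cnt_const_ss {S : Set G} (hS : ST A S) :
    ∀ N T, T.ncard ≤ N → ST A T → ∀ Z ∈ A.parts, ∀ z₁ ∈ Z, ∀ z₂ ∈ Z,
      cnt S T z₁ = cnt S T z₂ := by
  intro N
  induction N with
  | zero =>
    intro T hN _ Z _ z₁ _ z₂ _
    have : T = ∅ := by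
      rcases Set.eq_empty_or_nonempty T with h | h
      · exact h
      · exact absurd (Nat.le_zero.mp hN) (Set.ncard_ne_zero_of_mem h.choose_spec (Set.toFinite T)).elim
    subst this
    simp [cnt]
  | succ N ih =>
    intro T hN hT Z hZ z₁ h1 z₂ h2
    rcases Set.eq_empty_or_nonempty T with rfl | ⟨t, ht⟩
    · simp [cnt]
    obtain ⟨Y, hY, htY⟩ := A.exists_mem t
    obtain ⟨hTeq, hdisj, hlt⟩ := st_split hT hY ⟨t, htY, ht⟩
    have hT' : ST A (T \ Y) := st_diff hT hY
    calc cnt S T z₁ = cnt S Y z₁ + cnt S (T \ Y) z₁ := by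
            rw [← cnt_union_right hdisj, ← hTeq]
    _ = cnt S Y z₂ + cnt S (T \ Y) z₂ := by
            rw [cnt_const_sp hY S.ncard S le_rfl hS Z hZ z₁ h1 z₂ h2,
              ih (T \ Y) (Nat.lt_succ_iff.mp (lt_of_lt_of_le hlt hN)) hT' Z hZ z₁ h1 z₂ h2]
    _ = cnt S T z₂ := by rw [← cnt_union_right hdisj, ← hTeq]

lemma cnt_const {S T : Set G} (hS : ST A S) (hT : ST A T) {Z : Set G}
    (hZ : Z ∈ A.parts) {z₁ z₂ : G} (h1 : z₁ ∈ Z) (h2 : z₂ ∈ Z) :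
    cnt S T z₁ = cnt S T z₂ :=
  cnt_const_ss hS T.ncard T le_rfl hT Z hZ z₁ h1 z₂ h2

lemma cnt_pos {S T : Set G} {z : G} : 0 < cnt S T z ↔ z ∈ S * T := by
  rw [cnt, Set.ncard_pos (Set.toFinite _)]
  constructor
  · rintro ⟨⟨a, b⟩, ha, hb, hab⟩
    exact ⟨a, ha, b, hb, hab⟩
  · rintro ⟨a, ha, b, hb, hab⟩
    exact ⟨(a, b), ha, hb, hab⟩

lemma st_mul {S T : Set G} (hS : ST A S) (hT : ST A T) : ST A (S * T) := by
  rintro X hX ⟨x₀, hx₀X, hx₀⟩ x hx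
  have := cnt_const hS hT hX hx hx₀X
  rw [← cnt_pos, this, cnt_pos]
  exact hx₀

end Comb

section Comb2
variable {G : Type*} [CommGroup G] [Fintype G] {A : SRing G}

lemma st_prod {ι : Type*} (F : Finset ι) (f : ι → Set G) (h : ∀ i ∈ F, ST A (f i)) :
    ST A (∏ i ∈ F, f i) :=
  Finset.prod_induction f (ST A) (fun _ _ => st_mul) st_one h

end Comb2

end SylowTens


section NT

/-- The exponent used in `pPart`. -/
noncomputable def kE (n p : ℕ) : ℕ :=
  (n / p ^ n.factorization p) * (((n / p ^ n.factorization p : ℕ) :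
    ZMod (p ^ n.factorization p))⁻¹).val

lemma kE_modEq {n p : ℕ} (hp : p.Prime) (hn : n ≠ 0) :
    kE n p ≡ 1 [MOD p ^ n.factorization p] := by
  haveI : NeZero (p ^ n.factorization p) := ⟨pow_ne_zero _ hp.pos.ne'⟩
  have hcop : Nat.Coprime (n / p ^ n.factorization p) (p ^ n.factorization p) :=
    (Nat.coprime_ordCompl hp hn).symm.pow_right _
  rw [← ZMod.natCast_eq_natCast_iff]
  unfold kE
  push_cast
  rw [ZMod.natCast_zmod_val, ZMod.coe_mul_inv_eq_one _ hcop]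

lemma ordCompl_dvd_kE (n p : ℕ) : (n / p ^ n.factorization p) ∣ kE n p :=
  dvd_mul_right _ _

lemma ordProj_dvd_kE_of_ne {n p q : ℕ} (hp : p.Prime) (hq : q.Prime) (hqp : q ≠ p) :
    q ^ n.factorization q ∣ kE n p := by
  refine dvd_trans (Nat.dvd_ordCompl_of_dvd_not_dvd (Nat.ordProj_dvd n q) ?_)
    (ordCompl_dvd_kE n p)
  intro hdvd
  exact hqp ((Nat.prime_dvd_prime_iff_eq hp hq).mp (hp.dvd_of_dvd_pow hdvd)).symm

lemma sum_kE_modEq {n : ℕ} (hn : n ≠ 0) :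
    (∑ p ∈ n.primeFactors, kE n p) ≡ 1 [MOD n] := by
  have key : ∀ q ∈ n.primeFactors,
      ((q : ℤ) ^ n.factorization q) ∣ (∑ p ∈ n.primeFactors, (kE n p : ℤ)) - 1 := by
    intro q hq
    have hqp : q.Prime := Nat.prime_of_mem_primeFactors hq
    have hsum : (∑ p ∈ n.primeFactors, kE n p) ≡ kE n q + 0 [MOD q ^ n.factorization q] := by
      rw [← Finset.add_sum_erase _ _ hq]
      refine Nat.ModEq.add_left _ ((Nat.modEq_zero_iff_dvd).mpr (Finset.dvd_sum ?_))
      intro p hp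
      have hpp : p.Prime := Nat.prime_of_mem_primeFactors (Finset.mem_of_mem_erase hp)
      exact ordProj_dvd_kE_of_ne hpp hqp (Finset.ne_of_mem_erase hp).symm
    have h1 : (∑ p ∈ n.primeFactors, kE n p) ≡ 1 [MOD q ^ n.factorization q] :=
      hsum.trans (by simpa using kE_modEq hqp hn)
    have := (Nat.modEq_iff_dvd).mp h1
    push_cast at this ⊢
    exact (dvd_sub_comm).mp this
  have hn' : (∏ q ∈ n.primeFactors, q ^ n.factorization q) = n :=
    Nat.factorization_prod_pow_eq_self hn
  have hprod : ((∏ q ∈ n.primeFactors, q ^ n.factorization q : ℕ) : ℤ) ∣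
      ((∑ p ∈ n.primeFactors, kE n p : ℕ) : ℤ) - 1 := by
    push_cast
    refine Finset.prod_dvd_of_coprime ?_ key
    intro a ha b hb hab
    simp only [Function.onFun]
    exact (Nat.isCoprime_iff_coprime.mpr ((Nat.coprime_primes
      (Nat.prime_of_mem_primeFactors ha) (Nat.prime_of_mem_primeFactors hb)).mpr hab)).pow
  rw [hn'] at hprod
  rw [Nat.modEq_iff_dvd]
  exact (dvd_sub_comm).mp hprod

end NT


section Grp

variable {G : Type*} [CommGroup G] [Fintype G]

lemma pPart_eq_pow (p : ℕ) (g : G) : pPart p g = g ^ kE (Nat.card G) p := rfl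

lemma pPart_mul (p : ℕ) (a b : G) : pPart p (a * b) = pPart p a * pPart p b := by
  simp [pPart_eq_pow, mul_pow]

lemma pPart_inv (p : ℕ) (a : G) : pPart p a⁻¹ = (pPart p a)⁻¹ := by
  simp [pPart_eq_pow, inv_pow]

lemma pPart_one (p : ℕ) : pPart p (1 : G) = 1 := by simp [pPart_eq_pow]

lemma prod_pPart (g : G) : ∏ p ∈ (Nat.card G).primeFactors, pPart p g = g := by
  have hn : Nat.card G ≠ 0 := Nat.card_pos.ne'
  simp only [pPart_eq_pow]
  rw [Finset.prod_pow_eq_pow_sum]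
  conv_rhs => rw [← pow_one g]
  rw [pow_eq_pow_iff_modEq]
  exact (sum_kE_modEq hn).of_dvd (orderOf_dvd_natCard g)

lemma pPart_mem_sylow {p : ℕ} (hp : p.Prime) (P : Sylow p G) (g : G) :
    pPart p g ∈ P := by
  haveI := Fact.mk hp
  have hpow : (pPart p g) ^ (p ^ (Nat.card G).factorization p) = 1 := by
    rw [pPart_eq_pow, ← pow_mul]
    apply orderOf_dvd_iff_pow_eq_one.mp
    refine (orderOf_dvd_natCard g).trans ⟨((Nat.card G / p ^ (Nat.card G).factorization p : ZMod (p ^ (Nat.card G).factorization p))⁻¹).val, ?_⟩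
    unfold kE
    rw [mul_right_comm, mul_comm (Nat.card G / p ^ (Nat.card G).factorization p),
      Nat.ordProj_mul_ordCompl_eq_self (Nat.card G) p]
  have hPG : IsPGroup p (Subgroup.zpowers (pPart p g)) := by
    rintro ⟨x, hx⟩
    obtain ⟨i, rfl⟩ := hx
    have key : (pPart p g ^ i) ^ ((p : ℕ) ^ (Nat.card G).factorization p) = 1 := by
      rw [← zpow_natCast, ← zpow_mul, mul_comm, zpow_mul, zpow_natCast, hpow, one_zpow]
    exact ⟨(Nat.card G).factorization p,
      Subtype.ext (by rw [SubmonoidClass.coe_pow, OneMemClass.coe_one]; exact key)⟩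
  obtain ⟨Q, hQ⟩ := hPG.exists_le_sylow
  letI := Sylow.unique_of_normal P inferInstance
  have hQP : Q = P := Subsingleton.elim Q P
  exact hQP ▸ hQ (Subgroup.mem_zpowers _)

lemma pPart_eq_self_of_mem {p : ℕ} (hp : p.Prime) (P : Sylow p G) {y : G}
    (hy : y ∈ P) : pPart p y = y := by
  haveI := Fact.mk hp
  have hn : Nat.card G ≠ 0 := Nat.card_pos.ne'
  have hord : orderOf y ∣ p ^ (Nat.card G).factorization p := by
    have h1 := Subgroup.orderOf_dvd_natCard P.toSubgroup hy
    rwa [Sylow.card_eq_multiplicity P] at h1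
  rw [pPart_eq_pow]
  conv_rhs => rw [← pow_one y]
  rw [pow_eq_pow_iff_modEq]
  exact (kE_modEq hp hn).of_dvd hord

lemma pPart_pPart {p : ℕ} (hp : p.Prime) (P : Sylow p G) (g : G) :
    pPart p (pPart p g) = pPart p g :=
  pPart_eq_self_of_mem hp P (pPart_mem_sylow hp P g)

/-- The kernel of the `p`-projection. -/
noncomputable def Kgrp (G : Type*) [CommGroup G] [Fintype G] (p : ℕ) : Subgroup G :=
  MonoidHom.ker (powMonoidHom (kE (Nat.card G) p) : G →* G)

lemma mem_Kgrp {p : ℕ} {g : G} : g ∈ Kgrp G p ↔ pPart p g = 1 := Iff.rfl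

lemma sylow_le_Kgrp {p q : ℕ} (hp : p.Prime) (hq : q.Prime) (hqp : q ≠ p)
    (Q : Sylow q G) {y : G} (hy : y ∈ Q) : y ∈ Kgrp G p := by
  haveI := Fact.mk hq
  have hord : orderOf y ∣ q ^ (Nat.card G).factorization q := by
    have h1 := Subgroup.orderOf_dvd_natCard Q.toSubgroup hy
    rwa [Sylow.card_eq_multiplicity Q] at h1
  rw [mem_Kgrp, pPart_eq_pow]
  exact orderOf_dvd_iff_pow_eq_one.mp (hord.trans (ordProj_dvd_kE_of_ne hp hq hqp))

/-- A choice of Sylow subgroup for each prime. -/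
noncomputable def syl (G : Type*) [Group G] (q : ℕ) : Sylow q G := Classical.arbitrary _

lemma Kgrp_eq_prod {p : ℕ} (hp : p.Prime) (hpn : p ∣ Nat.card G) :
    (Kgrp G p : Set G) =
      ∏ q ∈ (Nat.card G).primeFactors.erase p, ((syl G q : Subgroup G) : Set G) := by
  have hn : Nat.card G ≠ 0 := Nat.card_pos.ne'
  have hpmem : p ∈ (Nat.card G).primeFactors := Nat.mem_primeFactors.mpr ⟨hp, hpn, hn⟩
  apply Set.Subset.antisymm
  · intro h hh
    have hcrt := prod_pPart h
    rw [← Finset.mul_prod_erase _ _ hpmem, (mem_Kgrp.mp hh), one_mul] at hcrt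
    rw [← hcrt]
    refine Set.finset_prod_mem_finset_prod _ _ _ ?_
    intro q hq
    exact pPart_mem_sylow (Nat.prime_of_mem_primeFactors (Finset.mem_of_mem_erase hq))
      (syl G q) h
  · refine Finset.prod_induction _ (fun S => S ⊆ (Kgrp G p : Set G)) ?_ ?_ ?_
    · rintro S T hS hT z hz
      rw [Set.mem_mul] at hz
      obtain ⟨a, ha, b, hb, rfl⟩ := hz
      exact mul_mem (hS ha) (hT hb)
    · rintro z hz
      rw [Set.mem_one] at hz
      subst hz; exact one_mem _
    · intro q hq y hy
      exact sylow_le_Kgrp hp (Nat.prime_of_mem_primeFactors (Finset.mem_of_mem_erase hq))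
        (Finset.ne_of_mem_erase hq) (syl G q) hy

end Grp


namespace SylowTens

section Main

variable {G : Type*} [CommGroup G] [Fintype G] {A : SRing G}

lemma st_of_isASubgroup {H : Subgroup G} (h : A.IsASubgroup H) : ST A (H : Set G) :=
  fun X hX ⟨g, hgX, hgH⟩ => h X hX g hgX hgH

lemma fiber_cnt (p : ℕ) (X : Set G) (z : G) :
    cnt ((Kgrp G p : Set G)) X z = {x ∈ X | pPart p x = pPart p z}.ncard := by
  rw [cnt, ← Set.ncard_image_of_injOn (f := Prod.snd)
    (s := {q : G × G | q.1 ∈ (Kgrp G p : Set G) ∧ q.2 ∈ X ∧ q.1 * q.2 = z}) ?inj]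
  · congr 1
    ext b
    constructor
    · rintro ⟨⟨a, c⟩, ⟨ha, hc, hac⟩, rfl⟩
      refine ⟨hc, ?_⟩
      have := congrArg (pPart p) hac
      rw [pPart_mul, mem_Kgrp.mp ha, one_mul] at this
      exact this
    · rintro ⟨hb, hpp⟩
      refine ⟨(z * b⁻¹, b), ⟨?_, hb, by group⟩, rfl⟩
      rw [SetLike.mem_coe, mem_Kgrp, pPart_mul, pPart_inv, hpp, mul_inv_cancel]
  case inj =>
    rintro ⟨a₁, b₁⟩ ⟨ha₁, hb₁, hab₁⟩ ⟨a₂, b₂⟩ ⟨ha₂, hb₂, hab₂⟩ h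
    simp only at h
    subst h
    have : a₁ = a₂ := by
      have := hab₁.trans hab₂.symm
      exact mul_right_cancel this
    rw [this]

lemma image_ncard_dvd {p : ℕ} (hSt : ST A (Kgrp G p : Set G)) {X : Set G}
    (hX : X ∈ A.parts) : (pPart p '' X).ncard ∣ X.ncard := by
  classical
  obtain ⟨x₀, hx₀⟩ := A.nonempty_mem X hX
  set s : Finset G := X.toFinite.toFinset with hs
  have hmem : ∀ x, x ∈ s ↔ x ∈ X := fun x => X.toFinite.mem_toFinset
  set t : Finset G := s.image (pPart p) with ht
  have himg : pPart p '' X = (t : Set G) := by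
    ext y
    simp only [ht, Finset.coe_image, Set.mem_image, Finset.mem_coe]
    constructor
    · rintro ⟨x, hx, rfl⟩; exact ⟨x, (hmem x).mpr hx, rfl⟩
    · rintro ⟨x, hx, rfl⟩; exact ⟨x, (hmem x).mp hx, rfl⟩
  have hcount : ∀ b ∈ t, (s.filter fun a => pPart p a = b).card = cnt (Kgrp G p : Set G) X x₀ := by
    intro b hb
    obtain ⟨z, hz, rfl⟩ := Finset.mem_image.mp hb
    have h1 : (s.filter fun a => pPart p a = pPart p z).card
        = {x ∈ X | pPart p x = pPart p z}.ncard := by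
      rw [Set.ncard_eq_toFinset_card' ]
      congr 1
      ext x
      simp [hmem x, Set.mem_toFinset]
    rw [h1, ← fiber_cnt]
    exact cnt_const hSt (st_part hX) hX ((hmem z).mp hz) hx₀
  have hcard : X.ncard = s.card := by
    rw [Set.ncard_eq_toFinset_card']
    congr 1
    ext x; simp [hmem x, Set.mem_toFinset]
  rw [hcard, himg, Set.ncard_coe_finset, Finset.card_eq_sum_card_image (pPart p) s,
    Finset.sum_congr rfl hcount, Finset.sum_const, smul_eq_mul]
  exact Dvd.intro _ rfl

lemma image_part {p : ℕ} (hp : p.Prime) (P : Sylow p G)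
    (hSt : ST A (Kgrp G p : Set G)) (hstP : ST A (P : Set G)) {X : Set G}
    (hX : X ∈ A.parts) : pPart p '' X ∈ A.parts ∧ pPart p '' X ⊆ (P : Set G) := by
  obtain ⟨x₀, hx₀⟩ := A.nonempty_mem X hX
  obtain ⟨Y, hY, hpY⟩ := A.exists_mem (pPart p x₀)
  have hYP : Y ⊆ (P : Set G) := hstP Y hY ⟨_, hpY, pPart_mem_sylow hp P x₀⟩
  have hKone : ∀ x : G, x⁻¹ * pPart p x ∈ Kgrp G p := by
    intro x
    rw [mem_Kgrp, pPart_mul, pPart_inv, pPart_pPart hp P, inv_mul_cancel]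
  have himg : pPart p '' X = (X * (Kgrp G p : Set G)) ∩ (P : Set G) := by
    ext z
    constructor
    · rintro ⟨x, hx, rfl⟩
      exact ⟨⟨x, hx, x⁻¹ * pPart p x, hKone x, (mul_inv_cancel_left x (pPart p x))⟩,
        pPart_mem_sylow hp P x⟩
    · rintro ⟨⟨x, hx, c, hc, rfl⟩, hzP⟩
      refine ⟨x, hx, ?_⟩
      have h1 : pPart p (x * c) = x * c := pPart_eq_self_of_mem hp P hzP
      rwa [pPart_mul, mem_Kgrp.mp hc, mul_one] at h1
  have hstimg : ST A (pPart p '' X) := by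
    rw [himg]
    exact st_inter (st_mul (st_part hX) hSt) hstP
  have hXY : X ⊆ Y * (Kgrp G p : Set G) := by
    refine st_mul (st_part hY) hSt X hX ⟨x₀, hx₀, ?_⟩
    refine ⟨pPart p x₀, hpY, (pPart p x₀)⁻¹ * x₀, ?_, mul_inv_cancel_left _ _⟩
    rw [SetLike.mem_coe, mem_Kgrp, pPart_mul, pPart_inv, pPart_pPart hp P, inv_mul_cancel]
  have himgY : pPart p '' X ⊆ Y := by
    rintro _ ⟨x, hx, rfl⟩
    obtain ⟨y, hy, c, hc, rfl⟩ := hXY hx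
    rw [pPart_mul, mem_Kgrp.mp hc, mul_one, pPart_eq_self_of_mem hp P (hYP hy)]
    exact hy
  have hYimg : Y ⊆ pPart p '' X := hstimg Y hY ⟨pPart p x₀, hpY, ⟨x₀, hx₀, rfl⟩⟩
  have heq : pPart p '' X = Y := Set.Subset.antisymm himgY hYimg
  rw [heq]
  exact ⟨hY, hYP⟩

lemma nat_prod_dvd {F : Finset ℕ} {f : ℕ → ℕ} {N : ℕ}
    (hc : ∀ a ∈ F, ∀ b ∈ F, a ≠ b → Nat.Coprime (f a) (f b))
    (hd : ∀ a ∈ F, f a ∣ N) : (∏ a ∈ F, f a) ∣ N := by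
  classical
  induction F using Finset.induction_on with
  | empty => simpa using one_dvd N
  | insert a F hnotmem ih =>
    rw [Finset.prod_insert hnotmem]
    refine Nat.Coprime.mul_dvd_of_dvd_of_dvd ?_ (hd a (Finset.mem_insert_self a F)) ?_
    · exact Nat.Coprime.prod_right fun b hb =>
        hc a (Finset.mem_insert_self a F) b (Finset.mem_insert_of_mem hb)
          (fun h => hnotmem (h ▸ hb))
    · exact ih (fun x hx y hy hxy => hc x (Finset.mem_insert_of_mem hx) y
        (Finset.mem_insert_of_mem hy) hxy) (fun x hx => hd x (Finset.mem_insert_of_mem hx))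

end Main

end SylowTens

/-- Let `A` be an S-ring over a finite abelian group `G` such
that for every prime `p` the Sylow `p`-subgroup of `G` is an
`A`-subgroup on which `A` restricts to a `p`-S-ring. Then `A` is the
tensor product of its Sylow constituents: every basic set `X` equals the
product of its projections to the Sylow subgroups. -/
theorem sylowtens {G : Type*} [CommGroup G] [Fintype G] (A : SRing G)
    (hSyl : ∀ (p : ℕ), p.Prime → ∀ P : Sylow p G,
      A.IsASubgroup P.toSubgroup ∧
      ∀ X ∈ A.parts, X ⊆ (P.toSubgroup : Set G) → ∃ k : ℕ, X.ncard = p ^ k) :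
    ∀ X ∈ A.parts,
      X = {g : G | ∀ p : ℕ, p.Prime → ∃ x ∈ X, pPart p g = pPart p x} := by
  classical
  intro X hX
  have hn : Nat.card G ≠ 0 := Nat.card_pos.ne'
  have hstSyl : ∀ q : ℕ, q.Prime → SylowTens.ST A ((syl G q : Subgroup G) : Set G) :=
    fun q hq => SylowTens.st_of_isASubgroup (hSyl q hq (syl G q)).1
  have hstK : ∀ p ∈ (Nat.card G).primeFactors, SylowTens.ST A ((Kgrp G p : Subgroup G) : Set G) := by
    intro p hp
    rw [Kgrp_eq_prod (Nat.prime_of_mem_primeFactors hp) (Nat.dvd_of_mem_primeFactors hp)]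
    exact SylowTens.st_prod _ _ (fun q hq =>
      hstSyl q (Nat.prime_of_mem_primeFactors (Finset.mem_of_mem_erase hq)))
  have himgpart : ∀ p ∈ (Nat.card G).primeFactors,
      pPart p '' X ∈ A.parts ∧ pPart p '' X ⊆ ((syl G p : Subgroup G) : Set G) :=
    fun p hp => SylowTens.image_part (Nat.prime_of_mem_primeFactors hp) (syl G p)
      (hstK p hp) (hstSyl p (Nat.prime_of_mem_primeFactors hp)) hX
  have hpk : ∀ p ∈ (Nat.card G).primeFactors, ∃ k, (pPart p '' X).ncard = p ^ k :=
    fun p hp => (hSyl p (Nat.prime_of_mem_primeFactors hp) (syl G p)).2 _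
      (himgpart p hp).1 (himgpart p hp).2
  have hdvd : ∀ p ∈ (Nat.card G).primeFactors, (pPart p '' X).ncard ∣ X.ncard :=
    fun p hp => SylowTens.image_ncard_dvd (hstK p hp) hX
  have hproddvd : (∏ p ∈ (Nat.card G).primeFactors, (pPart p '' X).ncard) ∣ X.ncard := by
    refine SylowTens.nat_prod_dvd ?_ hdvd
    intro a ha b hb hab
    obtain ⟨ka, hka⟩ := hpk a ha
    obtain ⟨kb, hkb⟩ := hpk b hb
    rw [hka, hkb]
    exact ((Nat.coprime_primes (Nat.prime_of_mem_primeFactors ha)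
      (Nat.prime_of_mem_primeFactors hb)).mpr hab).pow ka kb
  have hprodle : (∏ p ∈ (Nat.card G).primeFactors, (pPart p '' X).ncard) ≤ X.ncard :=
    Nat.le_of_dvd ((Set.ncard_pos (X.toFinite)).mpr (A.nonempty_mem X hX)) hproddvd
  set R := {g : G | ∀ p : ℕ, p.Prime → ∃ x ∈ X, pPart p g = pPart p x} with hR
  have hXR : X ⊆ R := fun x hx p _ => ⟨x, hx, rfl⟩
  have hinj : Function.Injective (fun (g : R) (i : (Nat.card G).primeFactors) =>
      (⟨pPart (i : ℕ) (g : G), by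
        obtain ⟨x, hx, he⟩ := g.2 (i : ℕ) (Nat.prime_of_mem_primeFactors i.2)
        exact ⟨x, hx, he.symm⟩⟩ : (pPart (i : ℕ) '' X))) := by
    intro g h hgh
    have hval : ∀ p ∈ (Nat.card G).primeFactors, pPart p (g : G) = pPart p (h : G) :=
      fun p hp => congrArg Subtype.val (congrFun hgh ⟨p, hp⟩)
    apply Subtype.ext
    calc (g : G) = ∏ p ∈ (Nat.card G).primeFactors, pPart p (g : G) := (prod_pPart _).symm
    _ = ∏ p ∈ (Nat.card G).primeFactors, pPart p (h : G) := Finset.prod_congr rfl hval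
    _ = (h : G) := prod_pPart _
  have hcard : R.ncard ≤ ∏ p ∈ (Nat.card G).primeFactors, (pPart p '' X).ncard := by
    rw [← Nat.card_coe_set_eq R]
    refine le_trans (Nat.card_le_card_of_injective _ hinj) ?_
    rw [Nat.card_pi]
    apply le_of_eq
    rw [← Finset.prod_coe_sort (Nat.card G).primeFactors (fun p => (pPart p '' X).ncard)]
    exact Finset.prod_congr rfl (fun i _ => Nat.card_coe_set_eq _)
  exact Set.eq_of_subset_of_ncard_le hXR (le_trans hcard hprodle) (Set.toFinite R)
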